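/- For any function u on the circle of circumference 2π with zero mean and u ∈ H¹, Agmon's inequality holds with constant one: ‖u‖_{L∞} ≤ ‖u‖_{L²}^{1/2} · ‖u_x‖_{L²}^{1/2}. -/

import Mathlib

set_option maxHeartbeats 800000


open MeasureTheory intervalIntegral Real

/-- Agmon's inequality with optimal constant 1 for zero-mean `2π`-periodic `H¹`
functions: `‖u‖_{L∞} ≤ ‖u‖_{L²}^{1/2} ‖u_x‖_{L²}^{1/2}`. -/
theorem agmon_inequality (u : ℝ → ℝ)
    (hper : Function.Periodic u (2 * Real.pi))
    (hreg : ContDiff ℝ 1 u)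
    (hmean : ∫ y in (0:ℝ)..(2 * Real.pi), u y = 0) :
    ∀ x : ℝ, |u x| ≤
      (∫ y in (0:ℝ)..(2 * Real.pi), (u y) ^ 2) ^ ((1:ℝ)/4) *
      (∫ y in (0:ℝ)..(2 * Real.pi), (deriv u y) ^ 2) ^ ((1:ℝ)/4) := by
  intro x
  have hπ : (0:ℝ) < 2 * Real.pi := by positivity
  have hu : Continuous u := hreg.continuous
  have hu' : Continuous (deriv u) := hreg.continuous_deriv le_rfl
  have hd : ∀ y : ℝ, HasDerivAt u (deriv u y) y := fun y =>
    ((hreg.differentiable one_ne_zero) y).hasDerivAt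
  -- deriv u is periodic
  have hper' : Function.Periodic (deriv u) (2 * Real.pi) := by
    intro y
    have h1 : HasDerivAt (fun t => u (t + 2 * Real.pi)) (deriv u (y + 2 * Real.pi)) y :=
      (hd (y + 2 * Real.pi)).comp_add_const y (2 * Real.pi)
    have h2 : (fun t => u (t + 2 * Real.pi)) = u := funext fun t => hper t
    rw [h2] at h1
    exact h1.deriv.symm
  -- a zero of u
  have hF : ∀ y : ℝ, HasDerivAt (fun t => ∫ s in (0:ℝ)..t, u s) (u y) y := fun y =>
    intervalIntegral.integral_hasDerivAt_right (hu.intervalIntegrable _ _)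
      (hu.stronglyMeasurableAtFilter _ _) hu.continuousAt
  obtain ⟨c, hcmem, huc⟩ : ∃ c ∈ Set.Ioo (0:ℝ) (2 * Real.pi), u c = 0 := by
    refine exists_hasDerivAt_eq_zero hπ
      (fun y _ => (hF y).continuousAt.continuousWithinAt) ?_ (fun y _ => hF y)
    simp [hmean]
  -- move x into [c, c + 2π)
  set x' := toIcoMod hπ c x with hx'def
  have hx'mem : x' ∈ Set.Ico c (c + 2 * Real.pi) := toIcoMod_mem_Ico hπ c x
  have hux' : u x' = u x := by
    have : x' = x - toIcoDiv hπ c x • (2 * Real.pi) := rfl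
    rw [this, hper.sub_zsmul_eq]
  -- FTC
  have hsq : ∀ y : ℝ, HasDerivAt (fun t => u t ^ 2) (2 * u y * deriv u y) y := by
    intro y
    have := (hd y).fun_pow 2
    simpa [mul_comm, mul_assoc, mul_left_comm] using this
  have hint : ∀ a b : ℝ, IntervalIntegrable (fun y => 2 * u y * deriv u y) volume a b :=
    fun a b => (Continuous.mul (continuous_const.mul hu) hu').intervalIntegrable a b
  have eq1 : ∫ y in c..x', 2 * u y * deriv u y = u x' ^ 2 := by
    rw [intervalIntegral.integral_eq_sub_of_hasDerivAt (fun y _ => hsq y) (hint c x'), huc]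
    ring
  have eq2 : ∫ y in x'..(c + 2 * Real.pi), 2 * u y * deriv u y = - u x' ^ 2 := by
    rw [intervalIntegral.integral_eq_sub_of_hasDerivAt (fun y _ => hsq y) (hint _ _)]
    have : u (c + 2 * Real.pi) = u c := hper c
    rw [this, huc]
    ring
  have habs : ∀ a b : ℝ, a ≤ b →
      |∫ y in a..b, 2 * u y * deriv u y| ≤ ∫ y in a..b, 2 * (|u y| * |deriv u y|) := by
    intro a b hab
    refine (intervalIntegral.abs_integral_le_integral_abs hab).trans ?_
    apply intervalIntegral.integral_mono_on hab
      ((Continuous.mul (continuous_const.mul hu) hu').abs.intervalIntegrable a b)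
      ((continuous_const.mul (hu.abs.mul hu'.abs)).intervalIntegrable a b)
    intro y _
    simp only [Pi.mul_apply]
    rw [abs_mul, abs_mul, abs_two]
    ring_nf
    exact le_refl _
  set B : ℝ := ∫ y in (0:ℝ)..(2 * Real.pi), |u y| * |deriv u y| with hBdef
  have hBper : ∫ y in c..(c + 2 * Real.pi), |u y| * |deriv u y| = B := by
    have hp2 : Function.Periodic (fun y => |u y| * |deriv u y|) (2 * Real.pi) := by
      intro y; simp [hper y, hper' y]
    have := hp2.intervalIntegral_add_eq c 0
    simpa using this
  -- u x' ^ 2 ≤ B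
  have hBabs : IntervalIntegrable (fun y => 2 * (|u y| * |deriv u y|)) volume c x' ∧
      IntervalIntegrable (fun y => 2 * (|u y| * |deriv u y|)) volume x' (c + 2 * Real.pi) :=
    ⟨(continuous_const.mul (hu.abs.mul hu'.abs)).intervalIntegrable _ _,
     (continuous_const.mul (hu.abs.mul hu'.abs)).intervalIntegrable _ _⟩
  have hkey : u x' ^ 2 ≤ B := by
    have h1 : u x' ^ 2 ≤ ∫ y in c..x', 2 * (|u y| * |deriv u y|) := by
      calc u x' ^ 2 = |∫ y in c..x', 2 * u y * deriv u y| := by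
            rw [eq1, abs_of_nonneg (sq_nonneg _)]
        _ ≤ _ := habs c x' hx'mem.1
    have h2 : u x' ^ 2 ≤ ∫ y in x'..(c + 2 * Real.pi), 2 * (|u y| * |deriv u y|) := by
      calc u x' ^ 2 = |∫ y in x'..(c + 2 * Real.pi), 2 * u y * deriv u y| := by
            rw [eq2, abs_neg, abs_of_nonneg (sq_nonneg _)]
        _ ≤ _ := habs x' _ hx'mem.2.le
    have hsum : (∫ y in c..x', 2 * (|u y| * |deriv u y|)) +
        (∫ y in x'..(c + 2 * Real.pi), 2 * (|u y| * |deriv u y|)) = 2 * B := by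
      rw [intervalIntegral.integral_add_adjacent_intervals hBabs.1 hBabs.2, ← hBper,
        intervalIntegral.integral_const_mul]
    nlinarith [h1, h2]
  -- Cauchy-Schwarz : B ^ 2 ≤ A * C
  set A : ℝ := ∫ y in (0:ℝ)..(2 * Real.pi), u y ^ 2 with hAdef
  set C : ℝ := ∫ y in (0:ℝ)..(2 * Real.pi), deriv u y ^ 2 with hCdef
  have hA0 : 0 ≤ A := intervalIntegral.integral_nonneg hπ.le (fun y _ => sq_nonneg _)
  have hC0 : 0 ≤ C := intervalIntegral.integral_nonneg hπ.le (fun y _ => sq_nonneg _)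
  have hB0 : 0 ≤ B := intervalIntegral.integral_nonneg hπ.le
    (fun y _ => mul_nonneg (abs_nonneg _) (abs_nonneg _))
  have hCS : B ^ 2 ≤ A * C := by
    have hq : ∀ t : ℝ, 0 ≤ C * (t * t) + (-(2 * B)) * t + A := by
      intro t
      have hnn : 0 ≤ ∫ y in (0:ℝ)..(2 * Real.pi), (t * |deriv u y| - |u y|) ^ 2 :=
        intervalIntegral.integral_nonneg hπ.le (fun y _ => sq_nonneg _)
      have hexp : ∫ y in (0:ℝ)..(2 * Real.pi), (t * |deriv u y| - |u y|) ^ 2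
          = C * (t * t) + (-(2 * B)) * t + A := by
        have : (fun y => (t * |deriv u y| - |u y|) ^ 2)
            = fun y => (t * t) * deriv u y ^ 2 + ((-(2 * t)) * (|u y| * |deriv u y|) + u y ^ 2) := by
          funext y
          have h1 : |deriv u y| ^ 2 = deriv u y ^ 2 := sq_abs _
          have h2 : |u y| ^ 2 = u y ^ 2 := sq_abs _
          nlinarith [h1, h2]
        have i1 : IntervalIntegrable (fun y => (t * t) * deriv u y ^ 2) volume 0 (2 * Real.pi) :=
          (continuous_const.mul (hu'.pow 2)).intervalIntegrable _ _
        have i2 : IntervalIntegrable (fun y => (-(2 * t)) * (|u y| * |deriv u y|)) volume 0 (2 * Real.pi) :=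
          (continuous_const.mul (hu.abs.mul hu'.abs)).intervalIntegrable _ _
        have i3 : IntervalIntegrable (fun y => u y ^ 2) volume 0 (2 * Real.pi) :=
          (hu.pow 2).intervalIntegrable _ _
        rw [this, intervalIntegral.integral_add i1 (i2.add i3),
          intervalIntegral.integral_add i2 i3,
          intervalIntegral.integral_const_mul, intervalIntegral.integral_const_mul]
        ring
      linarith [hnn, hexp.ge, hexp.le]
    have := discrim_le_zero hq
    rw [discrim] at this
    nlinarith [this]
  -- conclude
  have hpow : |u x| ^ (4:ℕ) ≤ (A ^ ((1:ℝ)/4) * C ^ ((1:ℝ)/4)) ^ (4:ℕ) := by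
    have hrhs : (A ^ ((1:ℝ)/4) * C ^ ((1:ℝ)/4)) ^ (4:ℕ) = A * C := by
      rw [mul_pow, ← Real.rpow_natCast (A ^ ((1:ℝ)/4)) 4, ← Real.rpow_natCast (C ^ ((1:ℝ)/4)) 4,
        ← Real.rpow_mul hA0, ← Real.rpow_mul hC0]
      norm_num
    rw [hrhs]
    have h1 : |u x| ^ (2:ℕ) = u x' ^ 2 := by rw [hux', sq_abs]
    calc |u x| ^ (4:ℕ) = (|u x| ^ (2:ℕ)) ^ (2:ℕ) := by ring
      _ = (u x' ^ 2) ^ 2 := by rw [h1]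
      _ ≤ B ^ 2 := by
          apply pow_le_pow_left₀ (sq_nonneg _) hkey
      _ ≤ A * C := hCS
  have h4 : (4:ℕ) ≠ 0 := by norm_num
  exact le_of_pow_le_pow_left₀ h4 (mul_nonneg (Real.rpow_nonneg hA0 _) (Real.rpow_nonneg hC0 _)) hpow
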